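/- Under Conditions R, for every s ∈ (0,1] and every θ ∈ Θ, the matrix B_n := I(θ̄_N) + k^{-1/2} ∫_0^1 Δ̇_k(θ + v(θ̄_N − θ), X^k_N) dv converges to the zero matrix in P_θ-probability as n → ∞, where k = ⌊sn⌋ and Δ̇_k(ϑ, X^k_N) = k^{-1/2} Σ_{j=N+1}^k ℓ̈(ϑ, X_{j-1}, X_j) is the θ-derivative of the score increment Δ_k. -/

import Mathlib

open MeasureTheory ProbabilityTheory Filter Topology Matrix

/-- The covector (bounded linear functional) on `Fin d → ℝ` associated to a vector. -/
noncomputable def covec {d : ℕ} (v : Fin d → ℝ) : (Fin d → ℝ) →L[ℝ] ℝ :=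
  ∑ i, v i • ContinuousLinearMap.proj i

/-- The standard Gaussian measure on `Fin d → ℝ`. -/
noncomputable def stdGaussianPi (d : ℕ) : Measure (Fin d → ℝ) :=
  Measure.pi fun _ => gaussianReal 0 1

open scoped Classical in
/-- The centered Gaussian measure on `Fin d → ℝ` with covariance matrix `C`. -/
noncomputable def gaussianVec {d : ℕ} (C : Matrix (Fin d) (Fin d) ℝ) : Measure (Fin d → ℝ) :=
  if h : C.PosSemidef then (stdGaussianPi d).map (fun z => (h.1.eigenvectorUnitary.1 * diagonal (Real.sqrt ∘ h.1.eigenvalues) *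
    (star h.1.eigenvectorUnitary : Matrix (Fin d) (Fin d) ℝ)).mulVec z) else 0

/-- Convergence in distribution (weak convergence of laws). -/
def WeakLim {Ω : Type*} [MeasurableSpace Ω] {E : Type*} [TopologicalSpace E] [MeasurableSpace E]
    (P : Measure Ω) (Z : ℕ → Ω → E) (μ : Measure E) : Prop :=
  ∀ f : BoundedContinuousFunction E ℝ,
    Tendsto (fun n => ∫ ω, f (Z n ω) ∂P) atTop (𝓝 (∫ x, f x ∂μ))
private lemma covec_norm_le {d : ℕ} (w : Fin d → ℝ) : ‖covec w‖ ≤ d * ‖w‖ := by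
  classical
  refine ContinuousLinearMap.opNorm_le_bound _ (by positivity) fun x => ?_
  have happ : covec w x = ∑ i : Fin d, w i * x i := by
    simp [covec, ContinuousLinearMap.sum_apply]
  rw [happ, Real.norm_eq_abs]
  calc |∑ i : Fin d, w i * x i| ≤ ∑ i : Fin d, |w i * x i| := Finset.abs_sum_le_sum_abs _ _
    _ ≤ ∑ _i : Fin d, ‖w‖ * ‖x‖ := by
        refine Finset.sum_le_sum fun i _ => ?_
        rw [abs_mul]
        have h1 : |w i| ≤ ‖w‖ := norm_le_pi_norm w i
        have h2 : |x i| ≤ ‖x‖ := norm_le_pi_norm x i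
        exact mul_le_mul h1 h2 (abs_nonneg _) (norm_nonneg _)
    _ = d * ‖w‖ * ‖x‖ := by
        rw [Finset.sum_const, Finset.card_univ, Fintype.card_fin, nsmul_eq_mul]
        ring

private lemma markov_aux {Ω : Type*} [MeasurableSpace Ω] (μ : Measure Ω)
    [IsProbabilityMeasure μ] {f : Ω → ℝ} (hf : Integrable f μ) (h0 : ∀ ω, 0 ≤ f ω)
    {M : ℝ} (hM : 0 < M) :
    μ {ω | M < f ω} ≤ ENNReal.ofReal ((∫ ω, f ω ∂μ) / M) := by
  have key := mul_meas_ge_le_integral_of_nonneg (Eventually.of_forall h0) hf M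
  have hsub : {ω | M < f ω} ⊆ {ω | M ≤ f ω} := fun ω hω => show M ≤ f ω from le_of_lt hω
  refine le_trans (measure_mono hsub) ?_
  rw [ENNReal.le_ofReal_iff_toReal_le (measure_ne_top μ _)
    (div_nonneg (integral_nonneg h0) hM.le), le_div_iff₀ hM]
  exact (mul_comm _ _).trans_le key

private lemma sqrt_tendsto_atTop : Tendsto Real.sqrt atTop atTop :=
  Tendsto.congr (fun x => (Real.sqrt_eq_rpow x).symm) (tendsto_rpow_atTop one_half_pos)

private lemma rpow_neg_half_eq (m : ℕ) :
    ((m : ℝ)) ^ (-(1 : ℝ) / 2) = (Real.sqrt m)⁻¹ := by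
  rw [Real.sqrt_eq_rpow, ← Real.rpow_neg (Nat.cast_nonneg m)]
  norm_num


set_option maxHeartbeats 2000000 in
/-- Under Conditions R, for every `s ∈ (0,1]` and `θ ∈ Θ`, the matrix
`B_n = I(θ̄_N) + k^{-1/2} ∫_0^1 Δ̇_k(θ + v(θ̄_N − θ), X^k_N) dv` converges to `0` in
`P θ`-probability, where `k = ⌊sn⌋` and `N = ⌊n^δ⌋`. -/
theorem one_step_MLE_process_matrix_remainder
    {d : ℕ} {Ω : Type*} [MeasurableSpace Ω]
    -- the parameter set
    (Θ : Set (Fin d → ℝ)) (hΘopen : IsOpen Θ) (hΘbdd : Bornology.IsBounded Θ)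
    (hΘconv : Convex ℝ Θ)
    -- the family of underlying probability measures and the observations
    (P : (Fin d → ℝ) → Measure Ω) (hP : ∀ θ, IsProbabilityMeasure (P θ))
    (X : ℕ → Ω → ℝ) (hX : ∀ j, Measurable (X j))
    -- the model: nonlinear autoregression with trend `S` and noise density `g`
    (S : (Fin d → ℝ) → ℝ → ℝ) (g : ℝ → ℝ) (hgpos : ∀ x, 0 < g x)
    (hnoise_law : ∀ θ ∈ Θ, ∀ j : ℕ,
      Measure.map (fun ω => X (j + 1) ω - S θ (X j ω)) (P θ)
        = volume.withDensity fun x => ENNReal.ofReal (g x))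
    (hnoise_indep : ∀ θ ∈ Θ, ∀ j : ℕ,
      Indep (MeasurableSpace.comap (fun ω => X (j + 1) ω - S θ (X j ω)) inferInstance)
        (⨆ i ∈ Finset.range (j + 1), MeasurableSpace.comap (X i) inferInstance) (P θ))
    -- (R1) strict stationarity with unique invariant density `π`
    (π : (Fin d → ℝ) → ℝ → ℝ)
    (hstat : ∀ θ ∈ Θ, ∀ m j : ℕ,
      Measure.map (fun ω (i : Fin m) => X (j + i) ω) (P θ)
        = Measure.map (fun ω (i : Fin m) => X i ω) (P θ))
    (hinv_dens : ∀ θ ∈ Θ,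
      Measure.map (X 0) (P θ) = volume.withDensity fun x => ENNReal.ofReal (π θ x))
    (hinv_uniq : ∀ θ ∈ Θ, ∀ μ : Measure ℝ, IsProbabilityMeasure μ →
      (μ.bind fun x => volume.withDensity fun y => ENNReal.ofReal (g (y - S θ x))) = μ →
      μ = volume.withDensity fun x => ENNReal.ofReal (π θ x))
    -- (R2) preliminary estimator built from the learning interval, uniformly √N-tight
    (θbar : ℕ → Ω → (Fin d → ℝ))
    (hbar_adapted : ∀ N : ℕ, @Measurable Ω (Fin d → ℝ)
      (MeasurableSpace.comap (fun ω (i : Fin (N + 1)) => X i ω) inferInstance) _ (θbar N))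
    (hR2 : ∀ K ⊆ Θ, IsCompact K → ∀ ε > (0 : ℝ), ∃ C > (0 : ℝ), ∀ N : ℕ, ∀ θ ∈ K,
      P θ {ω | C < ‖Real.sqrt N • (θbar N ω - θ)‖} ≤ ENNReal.ofReal ε)
    -- (R3) smoothness: `ℓdot`, `ℓddot`, `ℓdddot` are the θ-derivatives of
    -- `ℓ(θ,x,x') = log g(x' − S(θ,x))` of orders 1, 2, 3, majorized in square mean
    (hgC3 : ContDiff ℝ 3 g) (hSC3 : ∀ x : ℝ, ContDiffOn ℝ 3 (fun ϑ => S ϑ x) Θ)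
    (ℓdot : (Fin d → ℝ) → ℝ → ℝ → (Fin d → ℝ))
    (ℓddot : (Fin d → ℝ) → ℝ → ℝ → Matrix (Fin d) (Fin d) ℝ)
    (ℓdddot : (Fin d → ℝ) → ℝ → ℝ → Fin d → Fin d → Fin d → ℝ)
    (hℓdot : ∀ θ ∈ Θ, ∀ x x' : ℝ,
      HasFDerivAt (fun ϑ => Real.log (g (x' - S ϑ x))) (covec (ℓdot θ x x')) θ)
    (hℓddot : ∀ θ ∈ Θ, ∀ x x' : ℝ, ∀ i : Fin d,
      HasFDerivAt (fun ϑ => ℓdot ϑ x x' i) (covec (ℓddot θ x x' i)) θ)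
    (hℓdddot : ∀ θ ∈ Θ, ∀ x x' : ℝ, ∀ i j : Fin d,
      HasFDerivAt (fun ϑ => ℓddot ϑ x x' i j) (covec (ℓdddot θ x x' i j)) θ)
    (R₁ R₂ R₃ : ℝ → ℝ → ℝ)
    (hmaj1 : ∀ θ ∈ Θ, ∀ x x' : ℝ, ‖ℓdot θ x x'‖ ≤ R₁ x x')
    (hmaj2 : ∀ θ ∈ Θ, ∀ x x' : ℝ, ∀ i : Fin d, ‖ℓddot θ x x' i‖ ≤ R₂ x x')
    (hmaj3 : ∀ θ ∈ Θ, ∀ x x' : ℝ, ∀ i j : Fin d, ‖ℓdddot θ x x' i j‖ ≤ R₃ x x')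
    (hRmom : ∃ C > (0 : ℝ), ∀ θ ∈ Θ, ∀ j : ℕ, ∀ R ∈ ({R₁, R₂, R₃} : Set (ℝ → ℝ → ℝ)),
      Integrable (fun ω => (R (X j ω) (X (j + 1) ω)) ^ 2) (P θ) ∧
      ∫ ω, (R (X j ω) (X (j + 1) ω)) ^ 2 ∂(P θ) ≤ C)
    -- the Fisher information matrix
    (Info : (Fin d → ℝ) → Matrix (Fin d) (Fin d) ℝ)
    (hInfo : ∀ θ ∈ Θ, ∀ i j : Fin d, Info θ i j
      = ∫ ω, ℓdot θ (X 0 ω) (X 1 ω) i * ℓdot θ (X 0 ω) (X 1 ω) j ∂(P θ))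
    -- (R4) law of large numbers, central limit theorem, uniform tightness
    (hLLN : ∀ θ ∈ Θ, ∀ i j : Fin d, TendstoInMeasure (P θ)
      (fun (n : ℕ) ω => (1 / (n : ℝ)) *
        ∑ m ∈ Finset.Icc 1 n, ℓdot θ (X (m - 1) ω) (X m ω) i * ℓdot θ (X (m - 1) ω) (X m ω) j)
      atTop (fun _ => Info θ i j))
    (hCLT : ∀ θ ∈ Θ, WeakLim (P θ)
      (fun (n : ℕ) ω => ((n : ℝ) ^ (-(1 : ℝ) / 2)) •
        ∑ m ∈ Finset.Icc 1 n, ℓdot θ (X (m - 1) ω) (X m ω))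
      (gaussianVec (Info θ)))
    (hR4tight : ∀ K ⊆ Θ, IsCompact K → ∀ ε > (0 : ℝ), ∃ C > (0 : ℝ),
      ∀ n : ℕ, ∀ θ ∈ K, ∀ i j : Fin d,
      P θ {ω | C < |((n : ℝ) ^ (-(1 : ℝ) / 2)) *
        ∑ m ∈ Finset.Icc 1 n, (ℓddot θ (X (m - 1) ω) (X m ω) i j + Info θ i j)|}
        ≤ ENNReal.ofReal ε)
    -- (R5) Lipschitz continuity and uniform nondegeneracy of the Fisher information
    (hLip : ∃ L : ℝ, ∀ θ₁ ∈ Θ, ∀ θ₂ ∈ Θ, ∀ i j : Fin d,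
      |Info θ₁ i j - Info θ₂ i j| ≤ L * ‖θ₁ - θ₂‖)
    (hnondeg : ∃ c > (0 : ℝ), ∃ Cu : ℝ, ∀ θ ∈ Θ, ∀ lam : Fin d → ℝ, ‖lam‖ = 1 →
      c ≤ lam ⬝ᵥ (Info θ).mulVec lam ∧ lam ⬝ᵥ (Info θ).mulVec lam ≤ Cu)
    -- the learning interval `N = ⌊n^δ⌋`, `1/2 < δ < 1`
    (δ : ℝ) (hδ : δ ∈ Set.Ioo (1 / 2 : ℝ) 1) :
    ∀ s ∈ Set.Ioc (0 : ℝ) 1, ∀ θ ∈ Θ, ∀ i j : Fin d,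
      TendstoInMeasure (P θ)
        (fun (n : ℕ) ω =>
          Info (θbar ⌊(n : ℝ) ^ δ⌋₊ ω) i j +
            ∫ v in (0 : ℝ)..1, ((⌊s * (n : ℝ)⌋₊ : ℝ))⁻¹ *
              ∑ m ∈ Finset.Icc (⌊(n : ℝ) ^ δ⌋₊ + 1) ⌊s * (n : ℝ)⌋₊,
                ℓddot (θ + v • (θbar ⌊(n : ℝ) ^ δ⌋₊ ω - θ)) (X (m - 1) ω) (X m ω) i j)
        atTop (fun _ => 0) := by
  classical
  obtain ⟨L₀, hLipL⟩ := hLip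
  obtain ⟨CR, hCRpos, hRmomC⟩ := hRmom
  intro s hs θ hθ i j
  haveI := hP θ
  rw [tendstoInMeasure_iff_dist]
  intro ε hε
  have hδ0 : 0 < δ := lt_trans one_half_pos hδ.1
  have hδ1 : δ < 1 := hδ.2
  have hs0 : 0 < s := hs.1
  obtain ⟨r₀, hr₀pos, hball₀⟩ := Metric.isOpen_iff.mp hΘopen θ hθ
  have hrpos : 0 < r₀ / 2 := by positivity
  have hball : Metric.closedBall θ (r₀ / 2) ⊆ Θ :=
    (Metric.closedBall_subset_ball (by linarith)).trans hball₀
  have hL0 : 0 ≤ max L₀ 0 := le_max_right _ _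
  have hR₃0 : ∀ x x' : ℝ, 0 ≤ R₃ x x' :=
    fun x x' => le_trans (norm_nonneg _) (hmaj3 θ hθ x x' i j)
  -- integrability of `R₃` along the chain
  have hRint : ∀ m : ℕ, 1 ≤ m →
      Integrable (fun ω => R₃ (X (m - 1) ω) (X m ω)) (P θ) ∧
      ∫ ω, R₃ (X (m - 1) ω) (X m ω) ∂(P θ) ≤ CR + 1 := by
    intro m hm
    obtain ⟨hq, hqb⟩ := hRmomC θ hθ (m - 1) R₃ (by simp)
    rw [Nat.sub_add_cancel hm] at hq hqb
    have hasm : AEStronglyMeasurable (fun ω => R₃ (X (m - 1) ω) (X m ω)) (P θ) := by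
      have heq : (fun ω => R₃ (X (m - 1) ω) (X m ω)) =
          fun ω => Real.sqrt ((R₃ (X (m - 1) ω) (X m ω)) ^ 2) := by
        funext ω; rw [Real.sqrt_sq (hR₃0 _ _)]
      rw [heq]
      exact Real.continuous_sqrt.comp_aestronglyMeasurable hq.aestronglyMeasurable
    have hint : Integrable (fun ω => R₃ (X (m - 1) ω) (X m ω)) (P θ) := by
      refine Integrable.mono' ((integrable_const 1).add hq) hasm ?_
      refine Eventually.of_forall fun ω => ?_
      have h := hR₃0 (X (m - 1) ω) (X m ω)
      rw [Real.norm_eq_abs, abs_of_nonneg h]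
      show R₃ (X (m - 1) ω) (X m ω) ≤ 1 + R₃ (X (m - 1) ω) (X m ω) ^ 2
      nlinarith [sq_nonneg (R₃ (X (m - 1) ω) (X m ω) - 1)]
    refine ⟨hint, ?_⟩
    have hmono : ∫ ω, R₃ (X (m - 1) ω) (X m ω) ∂(P θ) ≤
        ∫ ω, (1 + (R₃ (X (m - 1) ω) (X m ω)) ^ 2) ∂(P θ) := by
      refine integral_mono hint ((integrable_const 1).add hq) fun ω => ?_
      have h := hR₃0 (X (m - 1) ω) (X m ω)
      show R₃ (X (m - 1) ω) (X m ω) ≤ 1 + R₃ (X (m - 1) ω) (X m ω) ^ 2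
      nlinarith [sq_nonneg (R₃ (X (m - 1) ω) (X m ω) - 1)]
    rw [integral_add (integrable_const 1) hq] at hmono
    simp only [integral_const, measure_univ, probReal_univ, ENNReal.toReal_one, smul_eq_mul, one_mul,
      mul_one] at hmono
    linarith
  -- asymptotics of `N = ⌊n^δ⌋` and `k = ⌊s n⌋`
  have hNtop : Tendsto (fun n : ℕ => ⌊(n : ℝ) ^ δ⌋₊) atTop atTop :=
    (tendsto_nat_floor_atTop (α := ℝ)).comp
      ((tendsto_rpow_atTop hδ0).comp tendsto_natCast_atTop_atTop)
  have hmul : Tendsto (fun n : ℕ => s * (n : ℝ)) atTop atTop :=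
    (tendsto_id.const_mul_atTop hs0).comp tendsto_natCast_atTop_atTop
  have hktop : Tendsto (fun n : ℕ => ⌊s * (n : ℝ)⌋₊) atTop atTop :=
    (tendsto_nat_floor_atTop (α := ℝ)).comp hmul
  have hkge : ∀ᶠ n : ℕ in atTop,
      s * (n : ℝ) / 2 ≤ (⌊s * (n : ℝ)⌋₊ : ℝ) ∧ 0 < s * (n : ℝ) / 2 ∧ 1 ≤ (n : ℝ) := by
    filter_upwards [hmul.eventually_ge_atTop 2, eventually_ge_atTop 1] with n hn hn1
    have h := Nat.sub_one_lt_floor (s * (n : ℝ))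
    refine ⟨by linarith, by linarith, by exact_mod_cast hn1⟩
  have hNratio : Tendsto (fun n : ℕ => (⌊(n : ℝ) ^ δ⌋₊ : ℝ) / (⌊s * (n : ℝ)⌋₊ : ℝ))
      atTop (𝓝 0) := by
    have hbase : Tendsto (fun n : ℕ => (2 / s) * (n : ℝ) ^ (δ - 1)) atTop (𝓝 0) := by
      have h1 : Tendsto (fun n : ℕ => (n : ℝ) ^ (δ - 1)) atTop (𝓝 0) := by
        have he : δ - 1 = -(1 - δ) := by ring
        rw [he]
        exact (tendsto_rpow_neg_atTop (by linarith)).comp tendsto_natCast_atTop_atTop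
      simpa using h1.const_mul (2 / s)
    refine squeeze_zero' (Eventually.of_forall fun n =>
      div_nonneg (Nat.cast_nonneg _) (Nat.cast_nonneg _)) ?_ hbase
    filter_upwards [hkge] with n hn
    have hnpos : (0 : ℝ) < n := by linarith [hn.2.2]
    have hfl : (⌊(n : ℝ) ^ δ⌋₊ : ℝ) ≤ (n : ℝ) ^ δ :=
      Nat.floor_le (Real.rpow_nonneg (Nat.cast_nonneg n) δ)
    have hdd := div_le_div₀ (Real.rpow_nonneg (Nat.cast_nonneg n) δ) hfl hn.2.1 hn.1
    refine hdd.trans (le_of_eq ?_)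
    rw [Real.rpow_sub hnpos, Real.rpow_one]
    field_simp
  have hSratio : Tendsto
      (fun n : ℕ => Real.sqrt (⌊(n : ℝ) ^ δ⌋₊ : ℝ) / (⌊s * (n : ℝ)⌋₊ : ℝ)) atTop (𝓝 0) := by
    have hbase : Tendsto (fun n : ℕ => (2 / s) * (n : ℝ) ^ (δ / 2 - 1)) atTop (𝓝 0) := by
      have h1 : Tendsto (fun n : ℕ => (n : ℝ) ^ (δ / 2 - 1)) atTop (𝓝 0) := by
        have he : δ / 2 - 1 = -(1 - δ / 2) := by ring
        rw [he]
        exact (tendsto_rpow_neg_atTop (by linarith)).comp tendsto_natCast_atTop_atTop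
      simpa using h1.const_mul (2 / s)
    refine squeeze_zero' (Eventually.of_forall fun n =>
      div_nonneg (Real.sqrt_nonneg _) (Nat.cast_nonneg _)) ?_ hbase
    filter_upwards [hkge] with n hn
    have hnpos : (0 : ℝ) < n := by linarith [hn.2.2]
    have hfl : Real.sqrt (⌊(n : ℝ) ^ δ⌋₊ : ℝ) ≤ (n : ℝ) ^ (δ / 2) := by
      have h1 : Real.sqrt (⌊(n : ℝ) ^ δ⌋₊ : ℝ) ≤ Real.sqrt ((n : ℝ) ^ δ) :=
        Real.sqrt_le_sqrt (Nat.floor_le (Real.rpow_nonneg (Nat.cast_nonneg n) δ))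
      refine h1.trans (le_of_eq ?_)
      rw [Real.sqrt_eq_rpow, ← Real.rpow_mul (Nat.cast_nonneg n)]
      congr 1
      ring
    have hdd := div_le_div₀ (Real.rpow_nonneg (Nat.cast_nonneg n) (δ / 2)) hfl hn.2.1 hn.1
    refine hdd.trans (le_of_eq ?_)
    rw [Real.rpow_sub hnpos, Real.rpow_one]
    field_simp
  have hinvsq : Tendsto (fun n : ℕ => (Real.sqrt (⌊s * (n : ℝ)⌋₊ : ℝ))⁻¹) atTop (𝓝 0) := by
    have h1 : Tendsto (fun n : ℕ => ((⌊s * (n : ℝ)⌋₊ : ℝ))⁻¹) atTop (𝓝 0) :=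
      (tendsto_natCast_atTop_atTop.comp hktop).inv_tendsto_atTop
    have h2 := (Real.continuous_sqrt.tendsto 0).comp h1
    simp only [Function.comp_def, Real.sqrt_inv, Real.sqrt_zero] at h2
    exact h2
  have hsqNtop : Tendsto (fun n : ℕ => Real.sqrt (⌊(n : ℝ) ^ δ⌋₊ : ℝ)) atTop atTop :=
    sqrt_tendsto_atTop.comp (tendsto_natCast_atTop_atTop.comp hNtop)
  -- reduce to a real `η`
  rw [ENNReal.tendsto_atTop_zero]
  intro ε' hε'
  obtain ⟨η, hη, hηle⟩ : ∃ η : ℝ, 0 < η ∧ ENNReal.ofReal η ≤ ε' := by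
    rcases eq_or_ne ε' ⊤ with h | h
    · exact ⟨1, one_pos, by simp [h]⟩
    · exact ⟨ε'.toReal, ENNReal.toReal_pos hε'.ne' h, by rw [ENNReal.ofReal_toReal h]⟩
  obtain ⟨C₁, hC₁pos, hC₁⟩ := hR2 {θ} (Set.singleton_subset_iff.mpr hθ)
    isCompact_singleton (η / 4) (by positivity)
  obtain ⟨C₂, hC₂pos, hC₂⟩ := hR4tight {θ} (Set.singleton_subset_iff.mpr hθ)
    isCompact_singleton (η / 4) (by positivity)
  set M : ℝ := 4 * (CR + 1) / η + 1 with hMdef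
  have hMpos : 0 < M := by positivity
  have hC'M : (CR + 1) / M ≤ η / 4 := by
    rw [div_le_iff₀ hMpos, hMdef]
    have h4 : η / 4 * (4 * (CR + 1) / η + 1) = (CR + 1) + η / 4 := by
      field_simp
    rw [h4]
    linarith
  have hdM0 : (0 : ℝ) ≤ (d : ℝ) * M := mul_nonneg (Nat.cast_nonneg d) hMpos.le
  set ρ : ℝ := min (r₀ / 2) (min (ε / (6 * (max L₀ 0 + 1))) (ε / (6 * ((d : ℝ) * M + 1))))
    with hρdef
  have hρpos : 0 < ρ := by
    refine lt_min hrpos (lt_min (by positivity) ?_)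
    have h6 : (0 : ℝ) < 6 * ((d : ℝ) * M + 1) := by positivity
    positivity
  have hρr : ρ ≤ r₀ / 2 := min_le_left _ _
  have hρL : max L₀ 0 * ρ ≤ ε / 6 := by
    have h1 : ρ ≤ ε / (6 * (max L₀ 0 + 1)) := le_trans (min_le_right _ _) (min_le_left _ _)
    refine (mul_le_mul_of_nonneg_left h1 hL0).trans ?_
    rw [mul_div_assoc', div_le_div_iff₀ (by positivity) (by norm_num : (0 : ℝ) < 6)]
    nlinarith [mul_nonneg hε.le hL0]
  have hρM : (d : ℝ) * M * ρ ≤ ε / 6 := by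
    have h1 : ρ ≤ ε / (6 * ((d : ℝ) * M + 1)) := le_trans (min_le_right _ _) (min_le_right _ _)
    refine (mul_le_mul_of_nonneg_left h1 hdM0).trans ?_
    rw [mul_div_assoc', div_le_div_iff₀ (by positivity) (by norm_num : (0 : ℝ) < 6)]
    nlinarith [mul_nonneg hε.le hdM0]
  -- the four exceptional events
  have ev1 : ∀ᶠ n : ℕ in atTop,
      P θ {ω | ρ < ‖θbar ⌊(n : ℝ) ^ δ⌋₊ ω - θ‖} ≤ ENNReal.ofReal (η / 4) := by
    have hlim : Tendsto (fun n : ℕ => Real.sqrt (⌊(n : ℝ) ^ δ⌋₊ : ℝ) * ρ) atTop atTop :=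
      hsqNtop.atTop_mul_const hρpos
    filter_upwards [hlim.eventually_ge_atTop C₁, hNtop.eventually_ge_atTop 1] with n hn hn1
    refine le_trans (measure_mono ?_) (hC₁ ⌊(n : ℝ) ^ δ⌋₊ θ (Set.mem_singleton θ))
    intro ω hω
    simp only [Set.mem_setOf_eq] at hω ⊢
    have hN1 : (1 : ℝ) ≤ ((⌊(n : ℝ) ^ δ⌋₊ : ℕ) : ℝ) := by exact_mod_cast hn1
    have hsqpos : 0 < Real.sqrt (⌊(n : ℝ) ^ δ⌋₊ : ℝ) := Real.sqrt_pos.mpr (by linarith)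
    rw [norm_smul, Real.norm_eq_abs, abs_of_nonneg (Real.sqrt_nonneg _)]
    calc C₁ ≤ Real.sqrt (⌊(n : ℝ) ^ δ⌋₊ : ℝ) * ρ := hn
      _ < Real.sqrt (⌊(n : ℝ) ^ δ⌋₊ : ℝ) * ‖θbar ⌊(n : ℝ) ^ δ⌋₊ ω - θ‖ :=
          (mul_lt_mul_iff_right₀ hsqpos).mpr hω
  have ev4 : ∀ᶠ n : ℕ in atTop,
      P θ {ω | M < ((⌊s * (n : ℝ)⌋₊ : ℝ))⁻¹ *
        ∑ m ∈ Finset.Icc (⌊(n : ℝ) ^ δ⌋₊ + 1) ⌊s * (n : ℝ)⌋₊, R₃ (X (m - 1) ω) (X m ω)}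
        ≤ ENNReal.ofReal (η / 4) := by
    filter_upwards [hktop.eventually_ge_atTop 1] with n hk1
    have hterm : ∀ m ∈ Finset.Icc (⌊(n : ℝ) ^ δ⌋₊ + 1) ⌊s * (n : ℝ)⌋₊,
        Integrable (fun ω => R₃ (X (m - 1) ω) (X m ω)) (P θ) := by
      intro m hm
      have h := (Finset.mem_Icc.mp hm).1
      exact (hRint m (by omega)).1
    have hintf : Integrable (fun ω => ((⌊s * (n : ℝ)⌋₊ : ℝ))⁻¹ *
        ∑ m ∈ Finset.Icc (⌊(n : ℝ) ^ δ⌋₊ + 1) ⌊s * (n : ℝ)⌋₊,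
          R₃ (X (m - 1) ω) (X m ω)) (P θ) :=
      (integrable_finset_sum _ hterm).const_mul _
    have hnn : ∀ ω, 0 ≤ ((⌊s * (n : ℝ)⌋₊ : ℝ))⁻¹ *
        ∑ m ∈ Finset.Icc (⌊(n : ℝ) ^ δ⌋₊ + 1) ⌊s * (n : ℝ)⌋₊, R₃ (X (m - 1) ω) (X m ω) :=
      fun ω => mul_nonneg (inv_nonneg.mpr (Nat.cast_nonneg _))
        (Finset.sum_nonneg fun m _ => hR₃0 _ _)
    have hkpos : (0 : ℝ) < (⌊s * (n : ℝ)⌋₊ : ℝ) := by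
      have h0 : 0 < ⌊s * (n : ℝ)⌋₊ := by omega
      exact_mod_cast h0
    have hIb : ∫ ω, (((⌊s * (n : ℝ)⌋₊ : ℝ))⁻¹ *
        ∑ m ∈ Finset.Icc (⌊(n : ℝ) ^ δ⌋₊ + 1) ⌊s * (n : ℝ)⌋₊,
          R₃ (X (m - 1) ω) (X m ω)) ∂(P θ) ≤ CR + 1 := by
      rw [integral_const_mul, integral_finset_sum _ hterm]
      have hb : ∑ m ∈ Finset.Icc (⌊(n : ℝ) ^ δ⌋₊ + 1) ⌊s * (n : ℝ)⌋₊,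
          ∫ ω, R₃ (X (m - 1) ω) (X m ω) ∂(P θ) ≤
          ((Finset.Icc (⌊(n : ℝ) ^ δ⌋₊ + 1) ⌊s * (n : ℝ)⌋₊).card : ℝ) * (CR + 1) := by
        calc ∑ m ∈ Finset.Icc (⌊(n : ℝ) ^ δ⌋₊ + 1) ⌊s * (n : ℝ)⌋₊,
            ∫ ω, R₃ (X (m - 1) ω) (X m ω) ∂(P θ)
            ≤ ∑ _m ∈ Finset.Icc (⌊(n : ℝ) ^ δ⌋₊ + 1) ⌊s * (n : ℝ)⌋₊, (CR + 1) :=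
              Finset.sum_le_sum fun m hm =>
                (hRint m (by have h := (Finset.mem_Icc.mp hm).1; omega)).2
          _ = _ := by rw [Finset.sum_const, nsmul_eq_mul]
      have hcard : ((Finset.Icc (⌊(n : ℝ) ^ δ⌋₊ + 1) ⌊s * (n : ℝ)⌋₊).card : ℝ) ≤
          (⌊s * (n : ℝ)⌋₊ : ℝ) := by
        rw [Nat.card_Icc]
        exact_mod_cast (by omega :
          ⌊s * (n : ℝ)⌋₊ + 1 - (⌊(n : ℝ) ^ δ⌋₊ + 1) ≤ ⌊s * (n : ℝ)⌋₊)
      calc ((⌊s * (n : ℝ)⌋₊ : ℝ))⁻¹ * ∑ m ∈ Finset.Icc (⌊(n : ℝ) ^ δ⌋₊ + 1) ⌊s * (n : ℝ)⌋₊,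
            ∫ ω, R₃ (X (m - 1) ω) (X m ω) ∂(P θ)
          ≤ ((⌊s * (n : ℝ)⌋₊ : ℝ))⁻¹ *
            (((Finset.Icc (⌊(n : ℝ) ^ δ⌋₊ + 1) ⌊s * (n : ℝ)⌋₊).card : ℝ) * (CR + 1)) :=
            mul_le_mul_of_nonneg_left hb (inv_nonneg.mpr hkpos.le)
        _ ≤ ((⌊s * (n : ℝ)⌋₊ : ℝ))⁻¹ * ((⌊s * (n : ℝ)⌋₊ : ℝ) * (CR + 1)) :=
            mul_le_mul_of_nonneg_left
              (mul_le_mul_of_nonneg_right hcard (by positivity)) (inv_nonneg.mpr hkpos.le)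
        _ = CR + 1 := by field_simp
    refine le_trans (markov_aux (P θ) hintf hnn hMpos) ?_
    refine le_trans (ENNReal.ofReal_le_ofReal ((div_le_div_iff_of_pos_right hMpos).mpr hIb))
      (ENNReal.ofReal_le_ofReal hC'M)
  -- deterministic eventualities
  have hd1 : ∀ᶠ n : ℕ in atTop, C₂ * (Real.sqrt (⌊s * (n : ℝ)⌋₊ : ℝ))⁻¹ < ε / 6 := by
    have h := hinvsq.const_mul C₂
    simp only [mul_zero] at h
    exact h.eventually (Iio_mem_nhds (by positivity))
  have hd2 : ∀ᶠ n : ℕ in atTop,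
      C₂ * (Real.sqrt (⌊(n : ℝ) ^ δ⌋₊ : ℝ) / (⌊s * (n : ℝ)⌋₊ : ℝ)) < ε / 6 := by
    have h := hSratio.const_mul C₂
    simp only [mul_zero] at h
    exact h.eventually (Iio_mem_nhds (by positivity))
  have hd3 : ∀ᶠ n : ℕ in atTop,
      ((⌊(n : ℝ) ^ δ⌋₊ : ℝ) / (⌊s * (n : ℝ)⌋₊ : ℝ)) * |Info θ i j| < ε / 6 := by
    have h := hNratio.mul_const |Info θ i j|
    simp only [zero_mul] at h
    exact h.eventually (Iio_mem_nhds (by positivity))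
  have hd4 : ∀ᶠ n : ℕ in atTop, 1 ≤ ⌊(n : ℝ) ^ δ⌋₊ := hNtop.eventually_ge_atTop 1
  have hd5 : ∀ᶠ n : ℕ in atTop, ⌊(n : ℝ) ^ δ⌋₊ + 1 ≤ ⌊s * (n : ℝ)⌋₊ := by
    filter_upwards [hNratio.eventually (Iio_mem_nhds (by norm_num : (0 : ℝ) < 1 / 2)),
      hktop.eventually_ge_atTop 4] with n h1 h2
    have hkpos : (0 : ℝ) < (⌊s * (n : ℝ)⌋₊ : ℝ) := by
      have h0 : 0 < ⌊s * (n : ℝ)⌋₊ := by omega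
      exact_mod_cast h0
    have h1' : (⌊(n : ℝ) ^ δ⌋₊ : ℝ) / (⌊s * (n : ℝ)⌋₊ : ℝ) < 1 / 2 := h1
    rw [div_lt_iff₀ hkpos] at h1'
    have h2N : 2 * ⌊(n : ℝ) ^ δ⌋₊ < ⌊s * (n : ℝ)⌋₊ := by
      have hc : ((2 * ⌊(n : ℝ) ^ δ⌋₊ : ℕ) : ℝ) < (⌊s * (n : ℝ)⌋₊ : ℝ) := by
        push_cast
        linarith
      exact_mod_cast hc
    omega
  -- the main eventual bound
  suffices key : ∀ᶠ n : ℕ in atTop,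
      P θ {x | ε ≤ dist
        (Info (θbar ⌊(n : ℝ) ^ δ⌋₊ x) i j +
          ∫ v in (0 : ℝ)..1, ((⌊s * (n : ℝ)⌋₊ : ℝ))⁻¹ *
            ∑ m ∈ Finset.Icc (⌊(n : ℝ) ^ δ⌋₊ + 1) ⌊s * (n : ℝ)⌋₊,
              ℓddot (θ + v • (θbar ⌊(n : ℝ) ^ δ⌋₊ x - θ)) (X (m - 1) x) (X m x) i j) 0}
        ≤ ENNReal.ofReal η by
    obtain ⟨N₀, hN₀⟩ := eventually_atTop.mp key
    exact ⟨N₀, fun n hn => le_trans (hN₀ n hn) hηle⟩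
  filter_upwards [ev1, ev4, hd1, hd2, hd3, hd4, hd5] with n hPA1 hPA4 hd1 hd2 hd3 hd4 hd5
  set N : ℕ := ⌊(n : ℝ) ^ δ⌋₊ with hNdef
  set k : ℕ := ⌊s * (n : ℝ)⌋₊ with hkdef
  have hk1 : 1 ≤ k := by omega
  have hNk : N ≤ k := by omega
  have hkR : (0 : ℝ) < (k : ℝ) := by
    have h0 : 0 < k := hk1
    exact_mod_cast h0
  have hNR1 : (0 : ℝ) < (N : ℝ) := by
    have h0 : 0 < N := hd4
    exact_mod_cast h0
  have hsqkpos : 0 < Real.sqrt (k : ℝ) := Real.sqrt_pos.mpr hkR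
  have hsqNpos : 0 < Real.sqrt (N : ℝ) := Real.sqrt_pos.mpr hNR1
  have hPA2 := hC₂ k θ (Set.mem_singleton θ) i j
  have hPA3 := hC₂ N θ (Set.mem_singleton θ) i j
  have hIcc1k : Finset.Icc 1 k = Finset.Ioc 0 k := by
    ext x; simp only [Finset.mem_Icc, Finset.mem_Ioc]; omega
  have hIcc1N : Finset.Icc 1 N = Finset.Ioc 0 N := by
    ext x; simp only [Finset.mem_Icc, Finset.mem_Ioc]; omega
  have hIccNk : Finset.Icc (N + 1) k = Finset.Ioc N k := by
    ext x; simp only [Finset.mem_Icc, Finset.mem_Ioc]; omega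
  have hsub : {x | ε ≤ dist
      (Info (θbar N x) i j +
        ∫ v in (0 : ℝ)..1, ((k : ℝ))⁻¹ *
          ∑ m ∈ Finset.Icc (N + 1) k,
            ℓddot (θ + v • (θbar N x - θ)) (X (m - 1) x) (X m x) i j) 0}
      ⊆ {ω | ρ < ‖θbar N ω - θ‖} ∪
        ({ω | C₂ < |((k : ℝ)) ^ (-(1 : ℝ) / 2) *
            ∑ m ∈ Finset.Icc 1 k, (ℓddot θ (X (m - 1) ω) (X m ω) i j + Info θ i j)|} ∪
         ({ω | C₂ < |((N : ℝ)) ^ (-(1 : ℝ) / 2) *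
            ∑ m ∈ Finset.Icc 1 N, (ℓddot θ (X (m - 1) ω) (X m ω) i j + Info θ i j)|} ∪
          {ω | M < ((k : ℝ))⁻¹ *
            ∑ m ∈ Finset.Icc (N + 1) k, R₃ (X (m - 1) ω) (X m ω)})) := by
    intro ω hω
    simp only [Set.mem_setOf_eq] at hω
    by_contra hnot
    simp only [Set.mem_union, Set.mem_setOf_eq, not_or, not_lt] at hnot
    obtain ⟨hc1, hc2, hc3, hc4⟩ := hnot
    rw [hIcc1k] at hc2
    rw [hIcc1N] at hc3
    set u : Fin d → ℝ := θbar N ω - θ with hu_def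
    have hu : ‖u‖ ≤ ρ := hc1
    have hθb : θbar N ω ∈ Θ := by
      apply hball
      rw [Metric.mem_closedBall, dist_eq_norm]
      exact le_trans hu hρr
    have hseg : ∀ v ∈ Set.Icc (0 : ℝ) 1, θ + v • u ∈ Metric.closedBall θ (r₀ / 2) := by
      intro v hv
      rw [Metric.mem_closedBall, dist_eq_norm, add_sub_cancel_left, norm_smul,
        Real.norm_eq_abs, abs_of_nonneg hv.1]
      calc v * ‖u‖ ≤ 1 * ρ := mul_le_mul hv.2 hu (norm_nonneg _) zero_le_one
        _ ≤ r₀ / 2 := by rw [one_mul]; exact hρr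
    have hlip : ∀ v ∈ Set.Icc (0 : ℝ) 1, ∀ m : ℕ,
        |ℓddot (θ + v • u) (X (m - 1) ω) (X m ω) i j -
          ℓddot θ (X (m - 1) ω) (X m ω) i j| ≤
          (d : ℝ) * R₃ (X (m - 1) ω) (X m ω) * ρ := by
      intro v hv m
      have hmv := Convex.norm_image_sub_le_of_norm_hasFDerivWithin_le
        (fun y hy => (hℓdddot y (hball hy) (X (m - 1) ω) (X m ω) i j).hasFDerivWithinAt)
        (fun y hy => le_trans (covec_norm_le _)
          (mul_le_mul_of_nonneg_left (hmaj3 y (hball hy) (X (m - 1) ω) (X m ω) i j)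
            (Nat.cast_nonneg d)))
        (convex_closedBall θ (r₀ / 2)) (Metric.mem_closedBall_self hrpos.le) (hseg v hv)
      have h1 : ‖(θ + v • u) - θ‖ ≤ ρ := by
        rw [add_sub_cancel_left, norm_smul, Real.norm_eq_abs, abs_of_nonneg hv.1]
        calc v * ‖u‖ ≤ 1 * ρ := mul_le_mul hv.2 hu (norm_nonneg _) zero_le_one
          _ = ρ := one_mul ρ
      calc |ℓddot (θ + v • u) (X (m - 1) ω) (X m ω) i j -
            ℓddot θ (X (m - 1) ω) (X m ω) i j|
          ≤ (d : ℝ) * R₃ (X (m - 1) ω) (X m ω) * ‖(θ + v • u) - θ‖ := by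
            simpa [Real.norm_eq_abs] using hmv
        _ ≤ (d : ℝ) * R₃ (X (m - 1) ω) (X m ω) * ρ :=
            mul_le_mul_of_nonneg_left h1
              (mul_nonneg (Nat.cast_nonneg d) (hR₃0 _ _))
    have hGcont : ContinuousOn (fun v : ℝ => ((k : ℝ))⁻¹ *
        ∑ m ∈ Finset.Icc (N + 1) k,
          ℓddot (θ + v • u) (X (m - 1) ω) (X m ω) i j) (Set.Icc 0 1) := by
      refine ContinuousOn.mul continuousOn_const ?_
      refine continuousOn_finset_sum _ fun m _ => ?_
      intro v hv
      refine ContinuousAt.continuousWithinAt ?_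
      have houter : ContinuousAt (fun ϑ => ℓddot ϑ (X (m - 1) ω) (X m ω) i j) (θ + v • u) :=
        (hℓdddot _ (hball (hseg v hv)) _ _ i j).differentiableAt.continuousAt
      have hinner : ContinuousAt (fun t : ℝ => θ + t • u) v :=
        (continuous_const.add (continuous_id.smul continuous_const)).continuousAt
      have hcompeq : (fun v : ℝ => ℓddot (θ + v • u) (X (m - 1) ω) (X m ω) i j) =
          (fun ϑ => ℓddot ϑ (X (m - 1) ω) (X m ω) i j) ∘ (fun t : ℝ => θ + t • u) := rfl
      rw [hcompeq]
      exact ContinuousAt.comp (x := v) houter hinner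
    have hGii : IntervalIntegrable (fun v : ℝ => ((k : ℝ))⁻¹ *
        ∑ m ∈ Finset.Icc (N + 1) k,
          ℓddot (θ + v • u) (X (m - 1) ω) (X m ω) i j) volume 0 1 := by
      apply ContinuousOn.intervalIntegrable
      rwa [Set.uIcc_of_le (zero_le_one : (0 : ℝ) ≤ 1)]
    set c : ℝ := ((k : ℝ))⁻¹ *
      ∑ m ∈ Finset.Icc (N + 1) k, ℓddot θ (X (m - 1) ω) (X m ω) i j with hc_def
    have hsplitInt : (∫ v in (0 : ℝ)..1, ((k : ℝ))⁻¹ *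
        ∑ m ∈ Finset.Icc (N + 1) k, ℓddot (θ + v • u) (X (m - 1) ω) (X m ω) i j) =
        (∫ v in (0 : ℝ)..1, (((k : ℝ))⁻¹ *
          ∑ m ∈ Finset.Icc (N + 1) k,
            ℓddot (θ + v • u) (X (m - 1) ω) (X m ω) i j - c)) + c := by
      rw [intervalIntegral.integral_sub hGii intervalIntegrable_const,
        intervalIntegral.integral_const]
      norm_num
    have hdev : |∫ v in (0 : ℝ)..1, (((k : ℝ))⁻¹ *
        ∑ m ∈ Finset.Icc (N + 1) k,
          ℓddot (θ + v • u) (X (m - 1) ω) (X m ω) i j - c)| ≤ (d : ℝ) * M * ρ := by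
      have hbd : ∀ v ∈ Set.uIoc (0 : ℝ) 1, ‖((k : ℝ))⁻¹ *
          ∑ m ∈ Finset.Icc (N + 1) k,
            ℓddot (θ + v • u) (X (m - 1) ω) (X m ω) i j - c‖ ≤
          (d : ℝ) * ρ * (((k : ℝ))⁻¹ *
            ∑ m ∈ Finset.Icc (N + 1) k, R₃ (X (m - 1) ω) (X m ω)) := by
        intro v hv
        have hv' : v ∈ Set.Icc (0 : ℝ) 1 := by
          rw [Set.uIoc_of_le (zero_le_one : (0 : ℝ) ≤ 1)] at hv
          exact ⟨hv.1.le, hv.2⟩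
        rw [hc_def, Real.norm_eq_abs, ← mul_sub, ← Finset.sum_sub_distrib, abs_mul,
          abs_of_nonneg (inv_nonneg.mpr (Nat.cast_nonneg k))]
        have hsum : ∑ m ∈ Finset.Icc (N + 1) k,
            ((d : ℝ) * R₃ (X (m - 1) ω) (X m ω) * ρ) =
            (d : ℝ) * ρ * ∑ m ∈ Finset.Icc (N + 1) k, R₃ (X (m - 1) ω) (X m ω) := by
          rw [Finset.mul_sum]
          exact Finset.sum_congr rfl fun m _ => by ring
        calc ((k : ℝ))⁻¹ * |∑ m ∈ Finset.Icc (N + 1) k,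
              (ℓddot (θ + v • u) (X (m - 1) ω) (X m ω) i j -
                ℓddot θ (X (m - 1) ω) (X m ω) i j)|
            ≤ ((k : ℝ))⁻¹ * ∑ m ∈ Finset.Icc (N + 1) k,
              |ℓddot (θ + v • u) (X (m - 1) ω) (X m ω) i j -
                ℓddot θ (X (m - 1) ω) (X m ω) i j| :=
              mul_le_mul_of_nonneg_left (Finset.abs_sum_le_sum_abs _ _)
                (inv_nonneg.mpr (Nat.cast_nonneg k))
          _ ≤ ((k : ℝ))⁻¹ * ∑ m ∈ Finset.Icc (N + 1) k,
              ((d : ℝ) * R₃ (X (m - 1) ω) (X m ω) * ρ) :=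
              mul_le_mul_of_nonneg_left (Finset.sum_le_sum fun m _ => hlip v hv' m)
                (inv_nonneg.mpr (Nat.cast_nonneg k))
          _ = (d : ℝ) * ρ * (((k : ℝ))⁻¹ *
              ∑ m ∈ Finset.Icc (N + 1) k, R₃ (X (m - 1) ω) (X m ω)) := by
              rw [hsum]; ring
      have hnorm := intervalIntegral.norm_integral_le_of_norm_le_const hbd
      rw [Real.norm_eq_abs] at hnorm
      refine le_trans hnorm ?_
      have h10 : |(1 : ℝ) - 0| = 1 := by norm_num
      rw [h10, mul_one]
      calc (d : ℝ) * ρ * (((k : ℝ))⁻¹ *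
            ∑ m ∈ Finset.Icc (N + 1) k, R₃ (X (m - 1) ω) (X m ω))
          ≤ (d : ℝ) * ρ * M :=
            mul_le_mul_of_nonneg_left hc4 (mul_nonneg (Nat.cast_nonneg d) hρpos.le)
        _ = (d : ℝ) * M * ρ := by ring
    set Tk : ℝ := ∑ m ∈ Finset.Ioc 0 k,
      (ℓddot θ (X (m - 1) ω) (X m ω) i j + Info θ i j) with hTk
    set TN : ℝ := ∑ m ∈ Finset.Ioc 0 N,
      (ℓddot θ (X (m - 1) ω) (X m ω) i j + Info θ i j) with hTN
    have hSb : ∑ m ∈ Finset.Icc (N + 1) k, ℓddot θ (X (m - 1) ω) (X m ω) i j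
        = (Tk - TN) - ((k : ℝ) - (N : ℝ)) * Info θ i j := by
      have hsplit := Finset.sum_Ioc_consecutive
        (fun m => ℓddot θ (X (m - 1) ω) (X m ω) i j + Info θ i j) (Nat.zero_le N) hNk
      have h1 : ∑ m ∈ Finset.Ioc N k,
          (ℓddot θ (X (m - 1) ω) (X m ω) i j + Info θ i j)
          = (∑ m ∈ Finset.Ioc N k, ℓddot θ (X (m - 1) ω) (X m ω) i j)
            + ((k : ℝ) - (N : ℝ)) * Info θ i j := by
        rw [Finset.sum_add_distrib, Finset.sum_const, Nat.card_Ioc, nsmul_eq_mul,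
          Nat.cast_sub hNk]
      rw [hIccNk, hTk, hTN, ← hsplit]
      linarith [h1]
    -- bounds for the three middle terms
    have hB2 : ((k : ℝ))⁻¹ * |Tk| ≤ ε / 6 := by
      rw [rpow_neg_half_eq k, abs_mul,
        abs_of_nonneg (inv_nonneg.mpr (Real.sqrt_nonneg _))] at hc2
      have hksq : ((k : ℝ))⁻¹ = (Real.sqrt (k : ℝ))⁻¹ * (Real.sqrt (k : ℝ))⁻¹ := by
        rw [← mul_inv, Real.mul_self_sqrt (Nat.cast_nonneg k)]
      rw [hksq, mul_assoc]
      calc (Real.sqrt (k : ℝ))⁻¹ * ((Real.sqrt (k : ℝ))⁻¹ * |Tk|)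
          ≤ (Real.sqrt (k : ℝ))⁻¹ * C₂ :=
            mul_le_mul_of_nonneg_left hc2 (inv_nonneg.mpr (Real.sqrt_nonneg _))
        _ = C₂ * (Real.sqrt (k : ℝ))⁻¹ := mul_comm _ _
        _ ≤ ε / 6 := le_of_lt hd1
    have hB3 : ((k : ℝ))⁻¹ * |TN| ≤ ε / 6 := by
      rw [rpow_neg_half_eq N, abs_mul,
        abs_of_nonneg (inv_nonneg.mpr (Real.sqrt_nonneg _))] at hc3
      have hTNle : |TN| ≤ C₂ * Real.sqrt (N : ℝ) := by
        have h' := mul_le_mul_of_nonneg_left hc3 (Real.sqrt_nonneg (N : ℝ))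
        rw [← mul_assoc, mul_inv_cancel₀ (ne_of_gt hsqNpos), one_mul] at h'
        exact h'.trans_eq (mul_comm _ _)
      calc ((k : ℝ))⁻¹ * |TN| ≤ ((k : ℝ))⁻¹ * (C₂ * Real.sqrt (N : ℝ)) :=
            mul_le_mul_of_nonneg_left hTNle (inv_nonneg.mpr (Nat.cast_nonneg k))
        _ = C₂ * (Real.sqrt (N : ℝ) / (k : ℝ)) := by rw [div_eq_mul_inv]; ring
        _ ≤ ε / 6 := le_of_lt hd2
    have hB4 : ((N : ℝ) / (k : ℝ)) * |Info θ i j| ≤ ε / 6 := le_of_lt hd3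
    have hB1 : |Info (θbar N ω) i j - Info θ i j| ≤ ε / 6 := by
      refine (hLipL (θbar N ω) hθb θ hθ i j).trans ?_
      calc L₀ * ‖θbar N ω - θ‖ ≤ max L₀ 0 * ρ :=
            mul_le_mul (le_max_left _ _) hu (norm_nonneg _) hL0
        _ ≤ ε / 6 := hρL
    -- assemble
    have hc_eq : c + Info θ i j = ((k : ℝ))⁻¹ * Tk - ((k : ℝ))⁻¹ * TN +
        ((N : ℝ) / (k : ℝ)) * Info θ i j := by
      rw [hc_def, hSb]
      field_simp
      ring
    have hBq : |((k : ℝ))⁻¹ * Tk - ((k : ℝ))⁻¹ * TN +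
        ((N : ℝ) / (k : ℝ)) * Info θ i j| ≤ ε / 6 + ε / 6 + ε / 6 := by
      have e1 : |((k : ℝ))⁻¹ * Tk| = ((k : ℝ))⁻¹ * |Tk| := by
        rw [abs_mul, abs_of_nonneg (inv_nonneg.mpr (Nat.cast_nonneg k))]
      have e2 : |((k : ℝ))⁻¹ * TN| = ((k : ℝ))⁻¹ * |TN| := by
        rw [abs_mul, abs_of_nonneg (inv_nonneg.mpr (Nat.cast_nonneg k))]
      have e3 : |((N : ℝ) / (k : ℝ)) * Info θ i j| =
          ((N : ℝ) / (k : ℝ)) * |Info θ i j| := by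
        rw [abs_mul, abs_of_nonneg (div_nonneg (Nat.cast_nonneg N) (Nat.cast_nonneg k))]
      calc |((k : ℝ))⁻¹ * Tk - ((k : ℝ))⁻¹ * TN + ((N : ℝ) / (k : ℝ)) * Info θ i j|
          ≤ |((k : ℝ))⁻¹ * Tk - ((k : ℝ))⁻¹ * TN| +
            |((N : ℝ) / (k : ℝ)) * Info θ i j| := abs_add_le _ _
        _ ≤ (|((k : ℝ))⁻¹ * Tk| + |((k : ℝ))⁻¹ * TN|) +
            |((N : ℝ) / (k : ℝ)) * Info θ i j| := add_le_add_left (abs_sub _ _) _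
        _ ≤ ε / 6 + ε / 6 + ε / 6 := by
            rw [e1, e2, e3]
            linarith [hB2, hB3, hB4]
    have habs : |Info (θbar N ω) i j +
        ∫ v in (0 : ℝ)..1, ((k : ℝ))⁻¹ *
          ∑ m ∈ Finset.Icc (N + 1) k,
            ℓddot (θ + v • u) (X (m - 1) ω) (X m ω) i j| < ε := by
      rw [hsplitInt]
      have hEq : Info (θbar N ω) i j +
          ((∫ v in (0 : ℝ)..1, (((k : ℝ))⁻¹ *
            ∑ m ∈ Finset.Icc (N + 1) k,
              ℓddot (θ + v • u) (X (m - 1) ω) (X m ω) i j - c)) + c) =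
          (Info (θbar N ω) i j - Info θ i j) +
          ((((k : ℝ))⁻¹ * Tk - ((k : ℝ))⁻¹ * TN + ((N : ℝ) / (k : ℝ)) * Info θ i j) +
            (∫ v in (0 : ℝ)..1, (((k : ℝ))⁻¹ *
              ∑ m ∈ Finset.Icc (N + 1) k,
                ℓddot (θ + v • u) (X (m - 1) ω) (X m ω) i j - c))) := by
        linarith [hc_eq]
      rw [hEq]
      calc |(Info (θbar N ω) i j - Info θ i j) +
            ((((k : ℝ))⁻¹ * Tk - ((k : ℝ))⁻¹ * TN + ((N : ℝ) / (k : ℝ)) * Info θ i j) +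
              (∫ v in (0 : ℝ)..1, (((k : ℝ))⁻¹ *
                ∑ m ∈ Finset.Icc (N + 1) k,
                  ℓddot (θ + v • u) (X (m - 1) ω) (X m ω) i j - c)))|
          ≤ |Info (θbar N ω) i j - Info θ i j| +
            (|((k : ℝ))⁻¹ * Tk - ((k : ℝ))⁻¹ * TN + ((N : ℝ) / (k : ℝ)) * Info θ i j| +
              |∫ v in (0 : ℝ)..1, (((k : ℝ))⁻¹ *
                ∑ m ∈ Finset.Icc (N + 1) k,
                  ℓddot (θ + v • u) (X (m - 1) ω) (X m ω) i j - c)|) :=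
            (abs_add_le _ _).trans (add_le_add_right (abs_add_le _ _) _)
        _ < ε := by
            have := hρM
            linarith [hB1, hBq, hdev]
    have hω' : ε ≤ |Info (θbar N ω) i j +
        ∫ v in (0 : ℝ)..1, ((k : ℝ))⁻¹ *
          ∑ m ∈ Finset.Icc (N + 1) k,
            ℓddot (θ + v • u) (X (m - 1) ω) (X m ω) i j| := by
      simpa [Real.dist_eq, sub_zero] using hω
    exact absurd hω' (not_le.mpr habs)
  refine le_trans (measure_mono hsub) ?_
  refine le_trans (measure_union_le _ _) ?_
  refine le_trans (add_le_add hPA1 (le_trans (measure_union_le _ _)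
    (add_le_add hPA2 (le_trans (measure_union_le _ _) (add_le_add hPA3 hPA4))))) ?_
  rw [← ENNReal.ofReal_add (by positivity) (by positivity),
    ← ENNReal.ofReal_add (by positivity) (by positivity),
    ← ENNReal.ofReal_add (by positivity) (by positivity)]
  exact ENNReal.ofReal_le_ofReal (by linarith)
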